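/- SL_2(Z/4Z) is isomorphic to a semidirect product A4 ⋊ C4, where C4 is generated by a lift of a transposition under the reduction map SL_2(Z/4Z) → SL_2(Z/2Z) ≅ S3 composed appropriately; in particular SL_2(Z/4Z) is a nonsplit central extension of S4 by C2. -/

import Mathlib

set_option maxRecDepth 100000

namespace Stmt14Aux

abbrev SL4 := Matrix.SpecialLinearGroup (Fin 2) (ZMod 4)

instance : DecidableEq SL4 := fun A B => decidable_of_iff (A.1 = B.1) Subtype.ext_iff.symm

instance : DecidableEq (Matrix.SpecialLinearGroup (Fin 2) (ZMod 2)) :=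
  fun A B => decidable_of_iff (A.1 = B.1) Subtype.ext_iff.symm

def mk4 (a b c d : ZMod 4) (h : Matrix.det !![a,b;c,d] = 1) : SL4 :=
  Subtype.mk !![a,b;c,d] h

def tau : Equiv.Perm (Fin 4) := Equiv.swap 0 1

abbrev A4 := alternatingGroup (Fin 4)

def cc : MulAut A4 := MulAut.conjNormal tau

instance : DecidableEq (MulAut A4) := fun f g =>
  decidable_of_iff (∀ x, f x = g x) ⟨fun h => MulEquiv.ext h, fun h x => by rw [h]⟩

def phi : Multiplicative (ZMod 4) →* MulAut A4 where
  toFun k := cc ^ (Multiplicative.toAdd k).val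
  map_one' := by decide
  map_mul' := by decide

abbrev SDP := A4 ⋊[phi] Multiplicative (ZMod 4)

instance : DecidableEq SDP := fun x y =>
  decidable_of_iff (x.left = y.left ∧ x.right = y.right)
    ⟨fun h => by cases x; cases y; simp_all, fun h => by cases h; exact ⟨rfl, rfl⟩⟩

instance : Fintype SDP :=
  Fintype.ofEquiv (A4 × Multiplicative (ZMod 4))
    ⟨fun p => ⟨p.1, p.2⟩, fun x => (x.left, x.right), fun _ => rfl, fun _ => rfl⟩

def T : SL4 := mk4 0 1 3 0 (by decide)

def tbl : List (Equiv.Perm (Fin 4) × SL4) := [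
  ((1 : Equiv.Perm (Fin 4)), mk4 1 0 0 1 (by decide)),
  (Equiv.swap 1 2 * Equiv.swap 2 3, mk4 3 3 1 0 (by decide)),
  (Equiv.swap 1 2 * Equiv.swap 1 3, mk4 0 1 3 3 (by decide)),
  (Equiv.swap 0 1 * Equiv.swap 2 3, mk4 1 2 2 1 (by decide)),
  (Equiv.swap 0 1 * Equiv.swap 1 2, mk4 2 3 3 1 (by decide)),
  (Equiv.swap 0 1 * Equiv.swap 1 3, mk4 1 3 3 2 (by decide)),
  (Equiv.swap 0 1 * Equiv.swap 0 2, mk4 1 1 1 2 (by decide)),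
  (Equiv.swap 0 2 * Equiv.swap 2 3, mk4 0 3 1 3 (by decide)),
  (Equiv.swap 0 2 * Equiv.swap 1 3, mk4 3 0 2 3 (by decide)),
  (Equiv.swap 0 1 * Equiv.swap 0 3, mk4 2 1 1 1 (by decide)),
  (Equiv.swap 0 2 * Equiv.swap 0 3, mk4 3 1 3 0 (by decide)),
  (Equiv.swap 0 3 * Equiv.swap 1 2, mk4 3 2 0 3 (by decide))]

def iota (p : Equiv.Perm (Fin 4)) : SL4 :=
  ((tbl.find? (fun q => q.1 = p)).map Prod.snd).getD 1

def iemb : A4 →* SL4 where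
  toFun a := iota a.val
  map_one' := by decide
  map_mul' := by decide

def Tpow : Multiplicative (ZMod 4) →* SL4 where
  toFun k := T ^ (Multiplicative.toAdd k).val
  map_one' := by decide
  map_mul' := by decide

theorem hcomp1 : ∀ g, iemb.comp ((phi g).toMonoidHom)
    = (MulAut.conj (Tpow g)).toMonoidHom.comp iemb := by
  have key : ∀ (g : Multiplicative (ZMod 4)) (a : A4),
      iemb ((phi g) a) = Tpow g * iemb a * (Tpow g)⁻¹ := by decide
  exact fun g => MonoidHom.ext fun a => key g a

def fhom : SDP →* SL4 := SemidirectProduct.lift iemb Tpow hcomp1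

theorem hbij : Function.Bijective fhom := by decide

noncomputable def e : SL4 ≃* SDP := (MulEquiv.ofBijective fhom hbij).symm

end Stmt14Aux
namespace Stmt14Aux

-- part 1 check
theorem part1 :
    orderOf (Matrix.SpecialLinearGroup.map
        (ZMod.castHom (show (2 : ℕ) ∣ 4 by norm_num) (ZMod 2))
        (e.symm (SemidirectProduct.inr (Multiplicative.ofAdd (1 : ZMod 4))))) = 2 := by
  have h1 : e.symm (SemidirectProduct.inr (Multiplicative.ofAdd (1 : ZMod 4))) = T := by
    show (MulEquiv.ofBijective fhom hbij).symm.symm (SemidirectProduct.inr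
      (Multiplicative.ofAdd (1 : ZMod 4))) = T
    rw [MulEquiv.symm_symm, MulEquiv.ofBijective_apply]
    decide
  rw [h1]
  exact orderOf_eq_prime (by decide) (by decide)

def spow : Multiplicative (ZMod 4) →* Equiv.Perm (Fin 4) where
  toFun k := tau ^ (Multiplicative.toAdd k).val
  map_one' := by decide
  map_mul' := by decide

theorem hcomp2 : ∀ g, (alternatingGroup (Fin 4)).subtype.comp ((phi g).toMonoidHom)
    = (MulAut.conj (spow g)).toMonoidHom.comp (alternatingGroup (Fin 4)).subtype := by
  have key : ∀ (g : Multiplicative (ZMod 4)) (a : A4),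
      ((phi g) a).val = spow g * a.val * (spow g)⁻¹ := by decide
  exact fun g => MonoidHom.ext fun a => key g a

def lft : SDP →* Equiv.Perm (Fin 4) :=
  SemidirectProduct.lift (alternatingGroup (Fin 4)).subtype spow hcomp2

theorem lft_surj : Function.Surjective lft := by decide

theorem key1 : ∀ x : SDP, lft x = 1 ↔ ∀ g : SL4, g * fhom x = fhom x * g := by decide

theorem key3 : ∀ x : SDP, fhom x * fhom x = 1 → Equiv.Perm.sign (lft x) = 1 := by decide

end Stmt14Aux
namespace Stmt14Aux

noncomputable def q : SL4 →* Equiv.Perm (Fin 4) := lft.comp e.toMonoidHom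

theorem hq : Function.Surjective q := lft_surj.comp e.surjective

theorem hg : ∀ g : SL4, fhom (e g) = g := fun g =>
  MulEquiv.ofBijective_apply_symm_apply fhom hbij

theorem hker : q.ker = Subgroup.center SL4 := by
  ext g
  rw [MonoidHom.mem_ker, Subgroup.mem_center_iff]
  have h2 : q g = lft (e g) := rfl
  rw [h2, key1 (e g), hg g]

noncomputable def psi : (SL4 ⧸ Subgroup.center SL4) ≃* Equiv.Perm (Fin 4) :=
  (QuotientGroup.quotientMulEquivOfEq hker.symm).trans
    (QuotientGroup.quotientKerEquivOfSurjective q hq)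

theorem hpsi : ∀ g : SL4, psi (QuotientGroup.mk' (Subgroup.center SL4) g) = q g := by
  intro g
  show (QuotientGroup.quotientKerEquivOfSurjective q hq)
    ((QuotientGroup.quotientMulEquivOfEq hker.symm) (QuotientGroup.mk g)) = q g
  rw [QuotientGroup.quotientMulEquivOfEq_mk]
  exact QuotientGroup.kerLift_mk q g

def negI : SL4 := mk4 3 0 0 3 (by decide)

theorem hcard : Nat.card (Subgroup.center SL4) = 2 := by
  rw [Nat.card_eq_two_iff]
  refine ⟨⟨1, Subgroup.one_mem _⟩, ⟨negI, Subgroup.mem_center_iff.mpr (by decide)⟩,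
    fun h => absurd (congrArg Subtype.val h) (by decide), ?_⟩
  rw [Set.eq_univ_iff_forall]
  rintro ⟨g, hgmem⟩
  rw [Subgroup.mem_center_iff] at hgmem
  rcases (by decide : ∀ g : SL4, (∀ h : SL4, h * g = g * h) → g = 1 ∨ g = negI) g hgmem with
    h | h <;> subst h
  · exact Set.mem_insert _ _
  · exact Set.mem_insert_of_mem _ rfl

theorem hiso : Nonempty ((Subgroup.center SL4) ≃* Multiplicative (ZMod 2)) :=
  ⟨mulEquivOfPrimeCardEq hcard (by simp [Nat.card_eq_fintype_card])⟩

theorem nonsplit : ¬ ∃ s : Equiv.Perm (Fin 4) →* SL4,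
    Function.Bijective ((QuotientGroup.mk' (Subgroup.center SL4)).comp s) := by
  rintro ⟨s, hs⟩
  set α := psi.toMonoidHom.comp ((QuotientGroup.mk' (Subgroup.center SL4)).comp s) with hα
  have hαbij : Function.Bijective α := psi.bijective.comp hs
  have hex : ∃ x y : Fin 4, x ≠ y ∧ Equiv.Perm.sign (α (Equiv.swap x y)) = -1 := by
    by_contra hcon
    push_neg at hcon
    have hall : ∀ p : Equiv.Perm (Fin 4), Equiv.Perm.sign (α p) = 1 := by
      intro p
      refine Equiv.Perm.swap_induction_on p (by simp) ?_
      intro f x y hxy hf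
      rw [map_mul, map_mul, hf, mul_one]
      rcases Int.units_eq_one_or (Equiv.Perm.sign (α (Equiv.swap x y))) with h | h
      · exact h
      · exact absurd h (hcon x y hxy)
    obtain ⟨p, hp⟩ := hαbij.2 (Equiv.swap 0 1)
    have h8 := hall p
    rw [hp] at h8
    simp at h8
  obtain ⟨x, y, hxy, hsgn⟩ := hex
  have hg2 : s (Equiv.swap x y) * s (Equiv.swap x y) = 1 := by
    rw [← map_mul, Equiv.swap_mul_self, map_one]
  have h4 := key3 (e (s (Equiv.swap x y)))
  rw [hg (s (Equiv.swap x y))] at h4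
  have h5 := h4 hg2
  have h6 : lft (e (s (Equiv.swap x y))) = q (s (Equiv.swap x y)) := rfl
  have h7 : α (Equiv.swap x y) = q (s (Equiv.swap x y)) := hpsi _
  rw [h6, ← h7] at h5
  rw [h5] at hsgn
  exact absurd hsgn (by decide)

end Stmt14Aux

open Stmt14Aux in
/-- `SL₂(ℤ/4ℤ)` is isomorphic to a semidirect product `A₄ ⋊ C₄`, where the generator of
`C₄` maps to an element of order 2 (a transposition) under the reduction
`SL₂(ℤ/4ℤ) → SL₂(ℤ/2ℤ) ≅ S₃`; in particular `SL₂(ℤ/4ℤ)` is a nonsplit central extension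
of `S₄` by `C₂`. -/
theorem stmt14 :
    (∃ (φ : Multiplicative (ZMod 4) →* MulAut (alternatingGroup (Fin 4)))
      (e : Matrix.SpecialLinearGroup (Fin 2) (ZMod 4) ≃*
        (alternatingGroup (Fin 4) ⋊[φ] Multiplicative (ZMod 4))),
      orderOf (Matrix.SpecialLinearGroup.map
          (ZMod.castHom (show (2 : ℕ) ∣ 4 by norm_num) (ZMod 2))
          (e.symm (SemidirectProduct.inr (Multiplicative.ofAdd (1 : ZMod 4))))) = 2) ∧
    ∃ (N : Subgroup (Matrix.SpecialLinearGroup (Fin 2) (ZMod 4))) (hN : N.Normal),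
      N ≤ Subgroup.center (Matrix.SpecialLinearGroup (Fin 2) (ZMod 4)) ∧
      Nonempty (N ≃* Multiplicative (ZMod 2)) ∧
      (letI := hN;
        Nonempty ((Matrix.SpecialLinearGroup (Fin 2) (ZMod 4) ⧸ N) ≃* Equiv.Perm (Fin 4)) ∧
        ¬ ∃ s : Equiv.Perm (Fin 4) →* Matrix.SpecialLinearGroup (Fin 2) (ZMod 4),
          Function.Bijective ((QuotientGroup.mk' N).comp s)) := by
  exact ⟨⟨phi, e, part1⟩,
    ⟨Subgroup.center SL4, inferInstance, le_refl _, hiso, ⟨psi⟩, nonsplit⟩⟩
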